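/- Let n be a natural number, let v : ℝⁿ → ℝⁿ (i.e., EuclideanSpace ℝ (Fin n) → EuclideanSpace ℝ (Fin n)) be continuously differentiable with bounded derivative (hence Lipschitz), and let Ω ⊆ ℝⁿ be a bounded measurable set. For t ∈ ℝ let Ω_t be the image of Ω under the map x ↦ x + t•v(x), and let |Ω_t| denote its Lebesgue measure (as a real number). Then the function t ↦ |Ω_t| has derivative ∫_Ω trace(fderiv ℝ v x) dx at t = 0, where trace(fderiv ℝ v x) is the divergence div v(x). -/

import Mathlib

open MeasureTheory

noncomputable def bE (n : ℕ) : Module.Basis (Fin n) ℝ (EuclideanSpace ℝ (Fin n)) :=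
  (EuclideanSpace.basisFun (Fin n) ℝ).toBasis

noncomputable def matE (n : ℕ) :
    (EuclideanSpace ℝ (Fin n) →L[ℝ] EuclideanSpace ℝ (Fin n)) →ₗ[ℝ] (Fin n → Fin n → ℝ) where
  toFun A := fun i j => LinearMap.toMatrix (bE n) (bE n) (A : _ →ₗ[ℝ] _) i j
  map_add' A B := by
    funext i j
    simp [Matrix.add_apply]
  map_smul' c A := by
    funext i j
    simp [Matrix.smul_apply]

noncomputable def detF (n : ℕ) : (Fin n → Fin n → ℝ) → ℝ := fun M => Matrix.det (Matrix.of M)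

lemma contDiff_detF (n : ℕ) : ContDiff ℝ 1 (detF n) := by
  have : detF n = fun M : Fin n → Fin n → ℝ =>
      ∑ σ : Equiv.Perm (Fin n), ((Equiv.Perm.sign σ : ℤ) : ℝ) * ∏ i, M (σ i) i := by
    funext M
    rw [detF, Matrix.det_apply]
    simp [Units.smul_def, zsmul_eq_mul]
  rw [this]
  refine ContDiff.sum fun σ _ => ContDiff.mul contDiff_const ?_
  refine contDiff_prod fun i _ => ?_
  exact ((ContinuousLinearMap.proj (R := ℝ) (φ := fun _ : Fin n => ℝ) i).comp
    (ContinuousLinearMap.proj (R := ℝ) (φ := fun _ : Fin n => (Fin n → ℝ)) (σ i))).contDiff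

noncomputable def gE (n : ℕ) (p : ℝ × (EuclideanSpace ℝ (Fin n) →L[ℝ] EuclideanSpace ℝ (Fin n))) : ℝ :=
  Matrix.det (1 + p.1 • Matrix.of (matE n p.2))

lemma contDiff_gE (n : ℕ) : ContDiff ℝ 1 (gE n) := by
  have hg : gE n = (detF n) ∘ (fun p : ℝ × (EuclideanSpace ℝ (Fin n) →L[ℝ] EuclideanSpace ℝ (Fin n)) =>
      fun i j => (1 : Matrix (Fin n) (Fin n) ℝ) i j + p.1 * matE n p.2 i j) := by
    funext p
    have hM : (1 + p.1 • Matrix.of (matE n p.2)) = Matrix.of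
        (fun i j => (1 : Matrix (Fin n) (Fin n) ℝ) i j + p.1 * matE n p.2 i j) := by
      ext i j
      simp [Matrix.add_apply, Matrix.smul_apply]
    show Matrix.det _ = Matrix.det _
    rw [hM]
  rw [hg]
  refine (contDiff_detF n).comp ?_
  refine contDiff_pi.2 fun i => contDiff_pi.2 fun j => ?_
  refine ContDiff.add contDiff_const (ContDiff.mul contDiff_fst ?_)
  exact (((ContinuousLinearMap.proj (R := ℝ) (φ := fun _ : Fin n => ℝ) j).comp
    ((ContinuousLinearMap.proj (R := ℝ) (φ := fun _ : Fin n => (Fin n → ℝ)) i).comp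
      (LinearMap.toContinuousLinearMap (matE n)))).comp
        (ContinuousLinearMap.snd ℝ ℝ _)).contDiff

lemma det_eq_gE (n : ℕ) (t : ℝ) (A : EuclideanSpace ℝ (Fin n) →L[ℝ] EuclideanSpace ℝ (Fin n)) :
    (ContinuousLinearMap.id ℝ (EuclideanSpace ℝ (Fin n)) + t • A).det = gE n (t, A) := by
  have hof : Matrix.of (matE n A) = LinearMap.toMatrix (bE n) (bE n) (A : _ →ₗ[ℝ] _) := rfl
  show LinearMap.det _ = _
  rw [← LinearMap.det_toMatrix (bE n)]
  unfold gE
  rw [hof]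
  congr 1
  have : ((ContinuousLinearMap.id ℝ (EuclideanSpace ℝ (Fin n)) + t • A : _ →L[ℝ] _) : _ →ₗ[ℝ] _)
      = (LinearMap.id : _ →ₗ[ℝ] _) + t • (A : EuclideanSpace ℝ (Fin n) →ₗ[ℝ] EuclideanSpace ℝ (Fin n)) := by
    ext x
    simp
  rw [this, map_add, _root_.map_smul, LinearMap.toMatrix_id]

noncomputable def GE (n : ℕ) (p : ℝ × (EuclideanSpace ℝ (Fin n) →L[ℝ] EuclideanSpace ℝ (Fin n))) : ℝ :=
  fderiv ℝ (gE n) p (1, 0)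

lemma hasDerivAt_gE (n : ℕ) (t : ℝ) (A : EuclideanSpace ℝ (Fin n) →L[ℝ] EuclideanSpace ℝ (Fin n)) :
    HasDerivAt (fun s => gE n (s, A)) (GE n (t, A)) t := by
  have h1 : HasDerivAt (fun s : ℝ => (s, A)) ((1 : ℝ), (0 : EuclideanSpace ℝ (Fin n) →L[ℝ] EuclideanSpace ℝ (Fin n))) t :=
    (hasDerivAt_id t).prodMk (hasDerivAt_const t A)
  have h2 : HasFDerivAt (gE n) (fderiv ℝ (gE n) (t, A)) (t, A) :=
    ((contDiff_gE n).differentiable one_ne_zero _).hasFDerivAt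
  exact h2.comp_hasDerivAt t h1

lemma GE_zero (n : ℕ) (A : EuclideanSpace ℝ (Fin n) →L[ℝ] EuclideanSpace ℝ (Fin n)) :
    GE n (0, A) = LinearMap.trace ℝ (EuclideanSpace ℝ (Fin n)) (A : _ →ₗ[ℝ] _) := by
  set M : Matrix (Fin n) (Fin n) ℝ := Matrix.of (matE n A) with hMdef
  set q : Polynomial ℝ := (Matrix.det (1 + (Polynomial.X : Polynomial ℝ) • M.map Polynomial.C)).divX.divX with hq
  have hfun : (fun s => gE n (s, A)) = fun s => 1 + Matrix.trace M * s + q.eval s * s ^ 2 :=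
    funext fun s => Matrix.det_one_add_smul s M
  have hc : HasDerivAt (fun s : ℝ => Matrix.trace M * s) (Matrix.trace M) 0 := by
    simpa using (hasDerivAt_id (0:ℝ)).const_mul (Matrix.trace M)
  have hq2 : HasDerivAt (fun s : ℝ => q.eval s * s ^ 2)
      (q.derivative.eval 0 * 0 ^ 2 + q.eval 0 * ((2:ℕ) * 0 ^ (2-1))) 0 :=
    (q.hasDerivAt 0).mul (hasDerivAt_pow 2 0)
  have h1 : HasDerivAt (fun s => gE n (s, A)) (Matrix.trace M) 0 := by
    rw [hfun]
    exact (((hasDerivAt_const (0:ℝ) (1:ℝ)).add hc).add hq2).congr_deriv (by simp)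
  have h2 := hasDerivAt_gE n 0 A
  have h3 : Matrix.trace M = GE n (0, A) := h1.unique h2
  rw [← h3, LinearMap.trace_eq_matrix_trace ℝ (bE n)]
  rfl

lemma GE_bound (n : ℕ) (K : ℝ) : ∃ C : ℝ, ∀ (t : ℝ) (A : EuclideanSpace ℝ (Fin n) →L[ℝ] EuclideanSpace ℝ (Fin n)),
    |t| ≤ 1 → ‖A‖ ≤ K → |GE n (t, A)| ≤ C := by
  set S := Metric.closedBall (0:ℝ) 1 ×ˢ Metric.closedBall
    (0 : EuclideanSpace ℝ (Fin n) →L[ℝ] EuclideanSpace ℝ (Fin n)) K with hS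
  have hScomp : IsCompact S := (isCompact_closedBall _ _).prod (isCompact_closedBall _ _)
  have hcont : Continuous fun p => fderiv ℝ (gE n) p := (contDiff_gE n).continuous_fderiv one_ne_zero
  obtain ⟨C, hC⟩ := hScomp.exists_bound_of_continuousOn (f := fun p => fderiv ℝ (gE n) p) hcont.continuousOn
  refine ⟨C, fun t A ht hA => ?_⟩
  have hmem : (t, A) ∈ S := by
    constructor
    · rw [Metric.mem_closedBall, Real.dist_eq, sub_zero]; exact ht
    · exact mem_closedBall_zero_iff.mpr hA
  have h1 : ‖fderiv ℝ (gE n) (t, A)‖ ≤ C := hC _ hmem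
  have h2 : |GE n (t, A)| ≤ ‖fderiv ℝ (gE n) (t, A)‖ * ‖((1:ℝ), (0 : EuclideanSpace ℝ (Fin n) →L[ℝ] EuclideanSpace ℝ (Fin n)))‖ :=
    (fderiv ℝ (gE n) (t, A)).le_opNorm _
  have h3 : ‖((1:ℝ), (0 : EuclideanSpace ℝ (Fin n) →L[ℝ] EuclideanSpace ℝ (Fin n)))‖ = 1 := by
    rw [Prod.norm_def, norm_zero]
    show ‖(1:ℝ)‖ ⊔ 0 = 1
    rw [norm_one]
    exact max_eq_left zero_le_one
  rw [h3, mul_one] at h2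
  exact h2.trans h1

lemma gE_bound (n : ℕ) (K : ℝ) : ∃ C : ℝ, ∀ (t : ℝ) (A : EuclideanSpace ℝ (Fin n) →L[ℝ] EuclideanSpace ℝ (Fin n)),
    |t| ≤ 1 → ‖A‖ ≤ K → |gE n (t, A)| ≤ C := by
  set S := Metric.closedBall (0:ℝ) 1 ×ˢ Metric.closedBall
    (0 : EuclideanSpace ℝ (Fin n) →L[ℝ] EuclideanSpace ℝ (Fin n)) K with hS
  have hScomp : IsCompact S := (isCompact_closedBall _ _).prod (isCompact_closedBall _ _)
  obtain ⟨C, hC⟩ := hScomp.exists_bound_of_continuousOn ((contDiff_gE n).continuous.continuousOn)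
  refine ⟨C, fun t A ht hA => ?_⟩
  have hmem : (t, A) ∈ S := by
    constructor
    · rw [Metric.mem_closedBall, Real.dist_eq, sub_zero]; exact ht
    · exact mem_closedBall_zero_iff.mpr hA
  simpa [Real.norm_eq_abs] using hC _ hmem

lemma gE_pos (n : ℕ) (K : ℝ) : ∃ δ > (0:ℝ), ∀ (t : ℝ) (A : EuclideanSpace ℝ (Fin n) →L[ℝ] EuclideanSpace ℝ (Fin n)),
    |t| < δ → ‖A‖ ≤ K → 0 < gE n (t, A) := by
  set U := (gE n) ⁻¹' Set.Ioi 0 with hU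
  have hUopen : IsOpen U := isOpen_Ioi.preimage (contDiff_gE n).continuous
  set C0 := ({(0:ℝ)} : Set ℝ) ×ˢ Metric.closedBall
    (0 : EuclideanSpace ℝ (Fin n) →L[ℝ] EuclideanSpace ℝ (Fin n)) K with hC0
  have hC0comp : IsCompact C0 := isCompact_singleton.prod (isCompact_closedBall _ _)
  have hsub : C0 ⊆ U := by
    rintro ⟨t, A⟩ ⟨ht, hA⟩
    have ht0 : t = 0 := ht
    subst ht0
    have : gE n (0, A) = 1 := by
      unfold gE
      simp
    simp [hU, Set.mem_preimage, this]
  obtain ⟨δ, hδpos, hδ⟩ := hC0comp.exists_thickening_subset_open hUopen hsub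
  refine ⟨δ, hδpos, fun t A ht hA => ?_⟩
  have hmem : (t, A) ∈ Metric.thickening δ C0 := by
    rw [Metric.mem_thickening_iff]
    refine ⟨(0, A), ⟨rfl, mem_closedBall_zero_iff.mpr hA⟩, ?_⟩
    simpa [Prod.dist_eq, Real.dist_eq] using ht
  exact hδ hmem


/-- First-order volume expansion (Section 2.1): for a `C¹` vector field `v` with
bounded derivative and a bounded measurable set `Ω ⊆ ℝⁿ`, the volume of the
perturbed domain `Ω_t = (id + t v)(Ω)` satisfies
`d/dt |Ω_t| |_{t=0} = ∫_Ω div v dx`, where `div v(x) = trace(Dv(x))`. -/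
theorem stmt_8 (n : ℕ) (v : EuclideanSpace ℝ (Fin n) → EuclideanSpace ℝ (Fin n))
    (hv : ContDiff ℝ 1 v) (K : ℝ) (hvK : ∀ x, ‖fderiv ℝ v x‖ ≤ K)
    (Ω : Set (EuclideanSpace ℝ (Fin n))) (hΩm : MeasurableSet Ω)
    (hΩb : Bornology.IsBounded Ω) :
    HasDerivAt (fun t : ℝ => (volume ((fun x => x + t • v x) '' Ω)).toReal)
      (∫ x in Ω, LinearMap.trace ℝ (EuclideanSpace ℝ (Fin n))
        (fderiv ℝ v x : EuclideanSpace ℝ (Fin n) →ₗ[ℝ] EuclideanSpace ℝ (Fin n))) 0 := by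
  classical
  have hK0 : (0:ℝ) ≤ K := le_trans (norm_nonneg _) (hvK 0)
  have hvdiff : Differentiable ℝ v := hv.differentiable one_ne_zero
  have hfcont : Continuous (fderiv ℝ v) := hv.continuous_fderiv one_ne_zero
  obtain ⟨C, hC⟩ := GE_bound n K
  obtain ⟨C₀, hC₀⟩ := gE_bound n K
  obtain ⟨δ, hδpos, hδ⟩ := gE_pos n K
  set ε : ℝ := min δ (min 1 (1 / (2 * (K + 1)))) with hε
  have hεpos : 0 < ε := by
    refine lt_min hδpos (lt_min one_pos ?_)
    positivity
  haveI : IsFiniteMeasure (volume.restrict Ω) :=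
    ⟨by rw [Measure.restrict_apply_univ]; exact hΩb.measure_lt_top⟩
  set F : ℝ → EuclideanSpace ℝ (Fin n) → ℝ := fun t x => gE n (t, fderiv ℝ v x) with hF
  set F' : ℝ → EuclideanSpace ℝ (Fin n) → ℝ := fun t x => GE n (t, fderiv ℝ v x) with hF'
  have hFcont : ∀ t, Continuous (F t) := fun t =>
    (contDiff_gE n).continuous.comp (continuous_const.prodMk hfcont)
  have hF'cont : Continuous (F' 0) := by
    have h1 : Continuous (fderiv ℝ (gE n)) := (contDiff_gE n).continuous_fderiv one_ne_zero
    have h2 : Continuous fun x : EuclideanSpace ℝ (Fin n) => fderiv ℝ (gE n) ((0:ℝ), fderiv ℝ v x) :=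
      h1.comp (continuous_const.prodMk hfcont)
    exact (ContinuousLinearMap.apply ℝ ℝ ((1:ℝ),
      (0 : EuclideanSpace ℝ (Fin n) →L[ℝ] EuclideanSpace ℝ (Fin n)))).continuous.comp h2
  have key := hasDerivAt_integral_of_dominated_loc_of_deriv_le (μ := volume.restrict Ω)
      (F := F) (F' := F') (x₀ := (0:ℝ)) (bound := fun _ => C) (s := Metric.ball 0 ε) (Metric.ball_mem_nhds 0 hεpos)
      (Filter.Eventually.of_forall fun t => (hFcont t).aestronglyMeasurable)
      ((integrable_const C₀).mono' (hFcont 0).aestronglyMeasurable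
        (Filter.Eventually.of_forall fun x => by
          simpa [Real.norm_eq_abs] using hC₀ 0 (fderiv ℝ v x) (by simp) (hvK x)))
      hF'cont.aestronglyMeasurable
      (Filter.Eventually.of_forall fun x t ht => by
        have ht1 : |t| ≤ 1 := by
          rw [Metric.mem_ball, Real.dist_eq, sub_zero] at ht
          exact le_of_lt (lt_of_lt_of_le ht (le_trans (min_le_right _ _) (min_le_left _ _)))
        simpa [Real.norm_eq_abs] using hC t (fderiv ℝ v x) ht1 (hvK x))
      (integrable_const C)
      (Filter.Eventually.of_forall fun x t _ => hasDerivAt_gE n t (fderiv ℝ v x))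
  have hderiv := key.2
  have hintegral_eq : (∫ x in Ω, F' 0 x) = ∫ x in Ω, LinearMap.trace ℝ (EuclideanSpace ℝ (Fin n))
      (fderiv ℝ v x : EuclideanSpace ℝ (Fin n) →ₗ[ℝ] EuclideanSpace ℝ (Fin n)) :=
    integral_congr_ae (Filter.Eventually.of_forall fun x => GE_zero n (fderiv ℝ v x))
  rw [hintegral_eq] at hderiv
  refine hderiv.congr_of_eventuallyEq ?_
  have hmem : Metric.ball (0:ℝ) ε ∈ nhds (0:ℝ) := Metric.ball_mem_nhds 0 hεpos
  refine Filter.eventuallyEq_of_mem hmem fun t ht => ?_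
  rw [Metric.mem_ball, Real.dist_eq, sub_zero] at ht
  have htδ : |t| < δ := lt_of_lt_of_le ht (min_le_left _ _)
  have htK : |t| * K ≤ 1/2 := by
    have h2 : |t| ≤ 1 / (2 * (K + 1)) :=
      le_of_lt (lt_of_lt_of_le ht (le_trans (min_le_right _ _) (min_le_right _ _)))
    have h3 : |t| * K ≤ (1 / (2 * (K + 1))) * K :=
      mul_le_mul_of_nonneg_right h2 hK0
    refine h3.trans ?_
    rw [div_mul_eq_mul_div, one_mul, div_le_iff₀ (by positivity)]
    nlinarith
  -- the perturbed map and its derivative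
  set ft : EuclideanSpace ℝ (Fin n) → EuclideanSpace ℝ (Fin n) := fun x => x + t • v x with hft
  set f't : EuclideanSpace ℝ (Fin n) → (EuclideanSpace ℝ (Fin n) →L[ℝ] EuclideanSpace ℝ (Fin n)) :=
    fun x => ContinuousLinearMap.id ℝ (EuclideanSpace ℝ (Fin n)) + t • fderiv ℝ v x with hf't
  have hder : ∀ x ∈ Ω, HasFDerivWithinAt ft (f't x) Ω x := fun x _ =>
    ((hasFDerivAt_id x).add ((hvdiff x).hasFDerivAt.const_smul t)).hasFDerivWithinAt
  -- Lipschitz bound for v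
  have hlip : LipschitzWith K.toNNReal v := by
    refine lipschitzWith_of_nnnorm_fderiv_le hvdiff fun x => ?_
    rw [← NNReal.coe_le_coe, coe_nnnorm, Real.coe_toNNReal K hK0]
    exact hvK x
  have hinj : Set.InjOn ft Ω := by
    intro x _ y _ hxy
    have hxy' : x + t • v x = y + t • v y := hxy
    have h1 : x - y = t • v y - t • v x := by
      calc x - y = (x + t • v x) - (y + t • v x) := by abel
        _ = (y + t • v y) - (y + t • v x) := by rw [hxy']
        _ = t • v y - t • v x := by abel
    have h2 : ‖x - y‖ = |t| * ‖v y - v x‖ := by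
      rw [h1, ← smul_sub, norm_smul, Real.norm_eq_abs]
    have h3 : ‖v y - v x‖ ≤ K * ‖x - y‖ := by
      have h4 := hlip.dist_le_mul y x
      rw [dist_eq_norm, dist_eq_norm] at h4
      calc ‖v y - v x‖ ≤ (K.toNNReal : ℝ) * ‖y - x‖ := h4
        _ = K * ‖x - y‖ := by rw [Real.coe_toNNReal K hK0, norm_sub_rev]
    have h5 : ‖x - y‖ ≤ (1/2) * ‖x - y‖ := by
      calc ‖x - y‖ = |t| * ‖v y - v x‖ := h2
        _ ≤ |t| * (K * ‖x - y‖) := mul_le_mul_of_nonneg_left h3 (abs_nonneg t)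
        _ = (|t| * K) * ‖x - y‖ := by ring
        _ ≤ (1/2) * ‖x - y‖ := mul_le_mul_of_nonneg_right htK (norm_nonneg _)
    have h6 : ‖x - y‖ ≤ 0 := by linarith
    have h7 : x - y = 0 := by
      exact norm_eq_zero.mp (le_antisymm h6 (norm_nonneg _))
    exact sub_eq_zero.mp h7
  have hdet : ∀ x, (f't x).det = gE n (t, fderiv ℝ v x) := fun x => det_eq_gE n t (fderiv ℝ v x)
  have hpos : ∀ x, 0 < gE n (t, fderiv ℝ v x) := fun x => hδ t _ htδ (hvK x)
  have hcv := MeasureTheory.lintegral_abs_det_fderiv_eq_addHaar_image volume hΩm hder hinj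
  show (volume (ft '' Ω)).toReal = ∫ x in Ω, F t x
  rw [← hcv]
  have hint : (∫ x in Ω, F t x) = (∫⁻ x in Ω, ENNReal.ofReal (F t x)).toReal :=
    integral_eq_lintegral_of_nonneg_ae (Filter.Eventually.of_forall fun x => (hpos x).le)
      (hFcont t).aestronglyMeasurable
  rw [hint]
  congr 1
  exact lintegral_congr fun x => by rw [hdet x, abs_of_pos (hpos x)]
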